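/- Let v_1,...,v_n ∈ ℤⁿ be the columns of a matrix B in Hermite normal form (upper triangular with nonnegative entries, off-diagonal entries in each column strictly smaller than the diagonal entry), with diagonal entries B_{11} = ... = B_{rr} = 1 and B_{jj} ≥ 2 for j > r. Fix an integer q ≥ 2 and j with 1 ≤ j ≤ n. Let f_1,...,f_n be the standard basis of ℤⁿ, and suppose a ∈ (1/q)ℤⁿ lies in the span of f_j,...,f_n. If there exists u ∈ ℤⁿ with |⟨a + u, v_i⟩| < 1 for all i = 1,...,n, then there exists such a u lying in the span of f_j,...,f_n. -/
import Mathlib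


/-- Lemma 3.2: With `B` in Hermite normal form (diagonal `1` in the
first `r` columns, `≥ 2` afterwards) and `a ∈ (1/q)ℤⁿ` supported on coordinates
`j, ..., n`, if some integer translate `a + u` lies in the open polytope
`{w : |⟨w, v i⟩| < 1 ∀ i}` (where `v i` is the `i`-th column of `B`),
then some such translate with `u` supported on coordinates `j, ..., n` does. -/
theorem stmt4 (n r : ℕ) (hr : r ≤ n) (B : Matrix (Fin n) (Fin n) ℤ)
    (htri : ∀ i k : Fin n, k < i → B i k = 0)
    (hnonneg : ∀ i k : Fin n, 0 ≤ B i k)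
    (hHNF : ∀ i k : Fin n, i < k → B i k < B k k)
    (hdiag1 : ∀ k : Fin n, (k : ℕ) < r → B k k = 1)
    (hdiag2 : ∀ k : Fin n, r ≤ (k : ℕ) → 2 ≤ B k k)
    (q : ℕ) (hq : 2 ≤ q) (j : Fin n)
    (a : Fin n → ℝ) (ha : ∀ i, ∃ k : ℤ, a i = (k : ℝ) / q)
    (hsupp : ∀ i : Fin n, i < j → a i = 0)
    (hex : ∃ u : Fin n → ℤ, ∀ k : Fin n, |∑ i, (a i + (u i : ℝ)) * (B i k : ℝ)| < 1) :
    ∃ u : Fin n → ℤ, (∀ i : Fin n, i < j → u i = 0) ∧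
      ∀ k : Fin n, |∑ i, (a i + (u i : ℝ)) * (B i k : ℝ)| < 1 := by
  obtain ⟨u, hu⟩ := hex
  refine ⟨u, ?_, hu⟩
  suffices H : ∀ m : ℕ, ∀ k : Fin n, (k : ℕ) = m → k < j → u k = 0 by
    intro i hij; exact H i i rfl hij
  intro m
  induction m using Nat.strong_induction_on with
  | _ m ih =>
    intro k hk hkj
    have hsum : ∑ i, (a i + (u i : ℝ)) * (B i k : ℝ) = ((u k * B k k : ℤ) : ℝ) := by
      rw [Finset.sum_eq_single k]
      · rw [hsupp k hkj]; push_cast; ring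
      · intro i _ hik
        rcases lt_or_gt_of_ne hik with h | h
        · have hui : u i = 0 := ih (i : ℕ) (hk ▸ h) i rfl (h.trans hkj)
          rw [hui, hsupp i (h.trans hkj)]; simp
        · rw [htri i k h]; simp
      · simp
    have hlt := hu k
    rw [hsum] at hlt
    have h0 : u k * B k k = 0 := by
      have : |u k * B k k| < 1 := by exact_mod_cast hlt
      exact Int.abs_lt_one_iff.mp this
    have hBk : B k k ≠ 0 := by
      rcases lt_or_ge (k : ℕ) r with h | h
      · rw [hdiag1 k h]; norm_num
      · have := hdiag2 k h; omega
    exact (mul_eq_zero.mp h0).resolve_right hBk
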